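/- Let A ⊂ ℝ be a finite set with |A| = n^{1/2} ≥ 2 (n a perfect square) that is of SzT-type with parameter α = 2 and coefficient d > 0. Then there is an absolute constant C > 0 such that for every real k ≥ 1, the number of triples (a,b,c) ∈ A³ with |(A − a) ∩ (A − b) ∩ (A − c)| ≥ k is at most C · d² · n² · (log n) / k³. -/

import Mathlib

open scoped Pointwise Classical

/-- `delta X Y s` is the number of representations of `s` as `x - y`, `x ∈ X`, `y ∈ Y`. -/
noncomputable def delta (X Y : Finset ℝ) (s : ℝ) : ℕ :=
  ((X ×ˢ Y).filter fun p => p.1 - p.2 = s).card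

/-- `X` is of Szemerédi–Trotter type with parameter `α = 2` and coefficient `d`. -/
def SzTType2 (X : Finset ℝ) (d : ℝ) : Prop :=
  ∀ (Y : Finset ℝ) (τ : ℝ), 1 ≤ τ →
    (((X - Y).filter fun s => τ ≤ (delta X Y s : ℝ)).card : ℝ)
      ≤ d * X.card * (Y.card : ℝ) ^ 2 / τ ^ 3

/-- The cardinality of `(A - a) ∩ (A - b) ∩ (A - c)`, realized as the set of
`z ∈ A - a` with `z + a, z + b, z + c ∈ A`. -/
noncomputable def tripleInterCard (A : Finset ℝ) (a b c : ℝ) : ℕ :=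
  (((A.image fun u => u - a).filter fun z =>
    z + a ∈ A ∧ z + b ∈ A ∧ z + c ∈ A)).card

lemma delta_eq_card_filter (X Y : Finset ℝ) (s : ℝ) :
    delta X Y s = (Y.filter fun y => y + s ∈ X).card := by
  classical
  unfold delta
  apply Finset.card_bij' (fun p _ => p.2) (fun y _ => (y + s, y))
  · intro p hp
    simp only [Finset.mem_filter, Finset.mem_product] at hp ⊢
    obtain ⟨⟨h1, h2⟩, h3⟩ := hp
    refine ⟨h2, ?_⟩
    have : p.2 + s = p.1 := by linarith
    rwa [this]
  · intro y hy
    simp only [Finset.mem_filter, Finset.mem_product] at hy ⊢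
    exact ⟨⟨hy.2, hy.1⟩, by ring⟩
  · intro p hp
    simp only [Finset.mem_filter, Finset.mem_product] at hp
    have : p.2 + s = p.1 := by linarith [hp.2]
    ext <;> simp [this]
  · intro y hy
    rfl

lemma delta_le_card (X Y : Finset ℝ) (s : ℝ) : delta X Y s ≤ Y.card := by
  rw [delta_eq_card_filter]; exact Finset.card_filter_le _ _


noncomputable def Pab (A : Finset ℝ) (a b : ℝ) : Finset ℝ :=
  (A.image fun u => u - a).filter fun z => z + a ∈ A ∧ z + b ∈ A

lemma mem_Pab {A : Finset ℝ} {a b z : ℝ} : z ∈ Pab A a b ↔ z + a ∈ A ∧ z + b ∈ A := by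
  simp only [Pab, Finset.mem_filter, Finset.mem_image, and_iff_right_iff_imp]
  rintro ⟨h1, h2⟩
  exact ⟨z + a, h1, by ring⟩

lemma tripleInterCard_eq (A : Finset ℝ) (a b c : ℝ) :
    tripleInterCard A a b c = ((Pab A a b).filter fun z => z + c ∈ A).card := by
  simp only [tripleInterCard, Pab, Finset.filter_filter]
  congr 1
  apply Finset.filter_congr
  intro z _
  tauto

lemma card_Pab (A : Finset ℝ) (a b : ℝ) : (Pab A a b).card = delta A A (a - b) := by
  rw [delta_eq_card_filter]
  apply Finset.card_bij' (fun z _ => z + b) (fun y _ => y - b)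
  · intro z hz
    rw [mem_Pab] at hz
    simp only [Finset.mem_filter]
    refine ⟨hz.2, ?_⟩
    have : z + b + (a - b) = z + a := by ring
    rw [this]; exact hz.1
  · intro y hy
    simp only [Finset.mem_filter] at hy
    rw [mem_Pab]
    constructor
    · have : y - b + a = y + (a - b) := by ring
      rw [this]; exact hy.2
    · have : y - b + b = y := by ring
      rw [this]; exact hy.1
  · intro z _; ring
  · intro y _; ring


lemma delta_Pab (A : Finset ℝ) (a b c : ℝ) :
    delta A (Pab A a b) c = tripleInterCard A a b c := by
  rw [delta_eq_card_filter, tripleInterCard_eq]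

lemma pair_bound (A : Finset ℝ) (d k : ℝ) (hSzT : SzTType2 A d) (hk : 1 ≤ k)
    (a b : ℝ) :
    ((A.filter fun c => k ≤ (tripleInterCard A a b c : ℝ)).card : ℝ)
      ≤ if k ≤ (delta A A (a - b) : ℝ) then
          d * A.card * ((delta A A (a - b) : ℝ)) ^ 2 / k ^ 3 else 0 := by
  split_ifs with h
  · have hsub : (A.filter fun c => k ≤ (tripleInterCard A a b c : ℝ))
        ⊆ ((A - Pab A a b).filter fun s => k ≤ (delta A (Pab A a b) s : ℝ)) := by
      intro c hc
      rw [Finset.mem_filter] at hc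
      have hd : k ≤ (delta A (Pab A a b) c : ℝ) := by rw [delta_Pab]; exact hc.2
      rw [Finset.mem_filter]
      refine ⟨?_, hd⟩
      have hne : delta A (Pab A a b) c ≠ 0 := by
        intro h0
        rw [h0] at hd
        norm_num at hd
        linarith
      have : ((A ×ˢ Pab A a b).filter fun p => p.1 - p.2 = c).Nonempty := by
        rw [← Finset.card_ne_zero]
        exact hne
      obtain ⟨p, hp⟩ := this
      simp only [Finset.mem_filter, Finset.mem_product] at hp
      rw [Finset.mem_sub]
      exact ⟨p.1, hp.1.1, p.2, hp.1.2, hp.2⟩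
    calc ((A.filter fun c => k ≤ (tripleInterCard A a b c : ℝ)).card : ℝ)
        ≤ (((A - Pab A a b).filter fun s => k ≤ (delta A (Pab A a b) s : ℝ)).card : ℝ) := by
          exact_mod_cast Finset.card_le_card hsub
      _ ≤ d * A.card * ((Pab A a b).card : ℝ) ^ 2 / k ^ 3 := hSzT _ k hk
      _ = d * A.card * ((delta A A (a - b) : ℝ)) ^ 2 / k ^ 3 := by rw [card_Pab]
  · have hempty : (A.filter fun c => k ≤ (tripleInterCard A a b c : ℝ)) = ∅ := by
      rw [Finset.filter_eq_empty_iff]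
      intro c _
      push_neg
      have h1 : tripleInterCard A a b c ≤ delta A A (a - b) := by
        rw [tripleInterCard_eq, ← card_Pab A a b]
        exact Finset.card_filter_le _ _
      push_neg at h
      calc (tripleInterCard A a b c : ℝ) ≤ (delta A A (a - b) : ℝ) := by exact_mod_cast h1
        _ < k := h
    rw [hempty]
    simp

lemma sum_fiber (A : Finset ℝ) (f : ℝ → ℝ) :
    ∑ p ∈ A ×ˢ A, f (p.1 - p.2) = ∑ s ∈ A - A, (delta A A s : ℝ) * f s := by
  classical
  rw [← Finset.sum_fiberwise_of_maps_to (g := fun p : ℝ × ℝ => p.1 - p.2)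
      (t := A - A) ?_ (fun p : ℝ × ℝ => f (p.1 - p.2))]
  · apply Finset.sum_congr rfl
    intro s _
    have h1 : ∀ p ∈ (A ×ˢ A).filter (fun p : ℝ × ℝ => p.1 - p.2 = s),
        f (p.1 - p.2) = f s := by
      intro p hp
      rw [Finset.mem_filter] at hp
      rw [hp.2]
    rw [Finset.sum_congr rfl h1, Finset.sum_const, delta]
    simp [mul_comm]
  · intro p hp
    rw [Finset.mem_product] at hp
    rw [Finset.mem_sub]
    exact ⟨p.1, hp.1, p.2, hp.2, rfl⟩

lemma sum_cube_le (A : Finset ℝ) (d k : ℝ) (m : ℕ) (hA : A.card = m) (hm : 2 ≤ m)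
    (hSzT : SzTType2 A d) (hk : 1 ≤ k) (hd : 0 < d) :
    ∑ s ∈ (A - A).filter (fun s => k ≤ (delta A A s : ℝ)), (delta A A s : ℝ) ^ 3
      ≤ 8 * d * (m : ℝ) ^ 3 * ((Nat.log 2 (m ^ 2) : ℝ) + 1) := by
  classical
  set J := Nat.log 2 (m ^ 2) with hJ
  set Ek := (A - A).filter (fun s => k ≤ (delta A A s : ℝ)) with hEk
  have hk0 : (0 : ℝ) < k := by linarith
  -- pointwise bound by sum over dyadic levels
  have step1 : ∀ s ∈ Ek, (delta A A s : ℝ) ^ 3 ≤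
      ∑ j ∈ Finset.range (J + 1),
        (if (2 : ℝ) ^ j * k ≤ (delta A A s : ℝ) ∧ (delta A A s : ℝ) < 2 ^ (j + 1) * k
          then (delta A A s : ℝ) ^ 3 else 0) := by
    intro s hs
    rw [hEk, Finset.mem_filter] at hs
    set D : ℝ := (delta A A s : ℝ) with hD
    have hD1 : 1 ≤ D := le_trans hk hs.2
    have hr1 : 1 ≤ D / k := (one_le_div hk0).2 hs.2
    set t := Nat.floor (D / k) with ht
    have ht1 : 1 ≤ t := Nat.one_le_floor_iff _ |>.2 hr1
    set j₀ := Nat.log 2 t with hj₀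
    have h2 : 2 ^ j₀ ≤ t := Nat.pow_log_le_self 2 (by omega)
    have h3 : t < 2 ^ (j₀ + 1) := Nat.lt_pow_succ_log_self (by norm_num) t
    have htr : (t : ℝ) ≤ D / k := Nat.floor_le (by positivity)
    have hcond : (2 : ℝ) ^ j₀ * k ≤ D ∧ D < 2 ^ (j₀ + 1) * k := by
      constructor
      · have : (2 : ℝ) ^ j₀ ≤ D / k := le_trans (by exact_mod_cast h2) htr
        calc (2 : ℝ) ^ j₀ * k ≤ (D / k) * k := by nlinarith
          _ = D := by field_simp
      · have h4 : D / k < (t : ℝ) + 1 := Nat.lt_floor_add_one _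
        have h5 : (t : ℝ) + 1 ≤ 2 ^ (j₀ + 1) := by
          have : t + 1 ≤ 2 ^ (j₀ + 1) := h3
          exact_mod_cast this
        have : D / k < 2 ^ (j₀ + 1) := lt_of_lt_of_le h4 h5
        calc D = (D / k) * k := by field_simp
          _ < 2 ^ (j₀ + 1) * k := by nlinarith
    have hj₀J : j₀ ∈ Finset.range (J + 1) := by
      rw [Finset.mem_range, Nat.lt_succ_iff, hJ]
      rw [Nat.le_log_iff_pow_le (b := 2) (by norm_num) (by positivity)]
      have hdm : delta A A s ≤ m := by rw [← hA]; exact delta_le_card A A s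
      have htd : (t : ℝ) ≤ D := le_trans htr (by
        rw [div_le_iff₀ hk0]; nlinarith)
      rw [hD] at htd
      have htd' : t ≤ delta A A s := by exact_mod_cast htd
      calc 2 ^ j₀ ≤ t := h2
        _ ≤ delta A A s := htd'
        _ ≤ m := hdm
        _ ≤ m ^ 2 := by nlinarith
    have hnonneg : ∀ j ∈ Finset.range (J + 1), (0 : ℝ) ≤
        (if (2 : ℝ) ^ j * k ≤ D ∧ D < 2 ^ (j + 1) * k then D ^ 3 else 0) := by
      intro j _
      split_ifs
      · positivity
      · exact le_rfl
    have := Finset.single_le_sum (f := fun j => if (2 : ℝ) ^ j * k ≤ D ∧ D < 2 ^ (j + 1) * k then D ^ 3 else 0) hnonneg hj₀J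
    simpa only [if_pos hcond] using this
  calc ∑ s ∈ Ek, (delta A A s : ℝ) ^ 3
      ≤ ∑ s ∈ Ek, ∑ j ∈ Finset.range (J + 1),
        (if (2 : ℝ) ^ j * k ≤ (delta A A s : ℝ) ∧ (delta A A s : ℝ) < 2 ^ (j + 1) * k
          then (delta A A s : ℝ) ^ 3 else 0) := Finset.sum_le_sum step1
    _ = ∑ j ∈ Finset.range (J + 1), ∑ s ∈ Ek,
        (if (2 : ℝ) ^ j * k ≤ (delta A A s : ℝ) ∧ (delta A A s : ℝ) < 2 ^ (j + 1) * k
          then (delta A A s : ℝ) ^ 3 else 0) := Finset.sum_comm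
    _ ≤ ∑ j ∈ Finset.range (J + 1), 8 * d * (m : ℝ) ^ 3 := by
        apply Finset.sum_le_sum
        intro j _
        rw [← Finset.sum_filter]
        set Tj := Ek.filter (fun s => (2 : ℝ) ^ j * k ≤ (delta A A s : ℝ) ∧
          (delta A A s : ℝ) < 2 ^ (j + 1) * k) with hTj
        have hτ : (1 : ℝ) ≤ 2 ^ j * k := by
          have h1 : (1 : ℝ) ≤ 2 ^ j := by { have := pow_le_pow_right₀ (by norm_num : (1:ℝ) ≤ 2) (Nat.zero_le j); simpa using this }
          nlinarith
        have hτ0 : (0 : ℝ) < 2 ^ j * k := by linarith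
        have hsub : Tj ⊆ (A - A).filter (fun s => (2 : ℝ) ^ j * k ≤ (delta A A s : ℝ)) := by
          intro s hs
          rw [hTj, Finset.mem_filter, hEk, Finset.mem_filter] at hs
          rw [Finset.mem_filter]
          exact ⟨hs.1.1, hs.2.1⟩
        have hcard : ((Tj.card : ℝ)) ≤ d * m * (m : ℝ) ^ 2 / (2 ^ j * k) ^ 3 := by
          calc ((Tj.card : ℝ)) ≤ (((A - A).filter
              (fun s => (2 : ℝ) ^ j * k ≤ (delta A A s : ℝ))).card : ℝ) := by
                exact_mod_cast Finset.card_le_card hsub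
            _ ≤ d * A.card * ((A.card : ℝ)) ^ 2 / (2 ^ j * k) ^ 3 := hSzT A _ hτ
            _ = d * m * (m : ℝ) ^ 2 / (2 ^ j * k) ^ 3 := by rw [hA]
        have hbd : ∀ s ∈ Tj, (delta A A s : ℝ) ^ 3 ≤ ((2 : ℝ) ^ (j + 1) * k) ^ 3 := by
          intro s hs
          rw [hTj, Finset.mem_filter] at hs
          have h0 : (0 : ℝ) ≤ (delta A A s : ℝ) := by positivity
          exact pow_le_pow_left₀ h0 (le_of_lt hs.2.2) 3
        calc ∑ s ∈ Tj, (delta A A s : ℝ) ^ 3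
            ≤ Tj.card • ((2 : ℝ) ^ (j + 1) * k) ^ 3 := Finset.sum_le_card_nsmul _ _ _ hbd
          _ = (Tj.card : ℝ) * ((2 : ℝ) ^ (j + 1) * k) ^ 3 := by rw [nsmul_eq_mul]
          _ ≤ (d * m * (m : ℝ) ^ 2 / (2 ^ j * k) ^ 3) * ((2 : ℝ) ^ (j + 1) * k) ^ 3 := by
              apply mul_le_mul_of_nonneg_right hcard (by positivity)
          _ = 8 * d * (m : ℝ) ^ 3 := by
              rw [pow_succ]
              field_simp
              ring
    _ = 8 * d * (m : ℝ) ^ 3 * ((J : ℝ) + 1) := by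
        rw [Finset.sum_const, Finset.card_range, nsmul_eq_mul]
        push_cast
        ring


theorem rich_points_of_SzT_type :
    ∃ C : ℝ, 0 < C ∧ ∀ (n m : ℕ) (A : Finset ℝ) (d k : ℝ),
      n = m ^ 2 → A.card = m → 2 ≤ m → 0 < d → SzTType2 A d → 1 ≤ k →
      (((A ×ˢ A ×ˢ A).filter fun t =>
          k ≤ (tripleInterCard A t.1 t.2.1 t.2.2 : ℝ)).card : ℝ)
        ≤ C * d ^ 2 * (n : ℝ) ^ 2 * Real.log n / k ^ 3 := by
  classical
  refine ⟨24, by norm_num, ?_⟩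
  intro n m A d k hn hA hm hd hSzT hk
  have hk0 : (0 : ℝ) < k := by linarith
  set J := Nat.log 2 (m ^ 2) with hJ
  -- Step 1: expand the triple count as a double sum
  have h1 : ((A ×ˢ A ×ˢ A).filter fun t =>
        k ≤ (tripleInterCard A t.1 t.2.1 t.2.2 : ℝ)).card
      = ∑ p ∈ A ×ˢ A, (A.filter fun c => k ≤ (tripleInterCard A p.1 p.2 c : ℝ)).card := by
    rw [Finset.card_filter, Finset.sum_product]
    simp_rw [Finset.sum_product, Finset.card_filter]
  -- Step 2: per-pair bound and fiberwise regrouping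
  have h2 : (((A ×ˢ A ×ˢ A).filter fun t =>
        k ≤ (tripleInterCard A t.1 t.2.1 t.2.2 : ℝ)).card : ℝ)
      ≤ ∑ s ∈ (A - A).filter (fun s => k ≤ (delta A A s : ℝ)),
          d * m * (delta A A s : ℝ) ^ 3 / k ^ 3 := by
    rw [h1]
    push_cast
    calc ∑ p ∈ A ×ˢ A, ((A.filter fun c => k ≤ (tripleInterCard A p.1 p.2 c : ℝ)).card : ℝ)
        ≤ ∑ p ∈ A ×ˢ A, (fun s => if k ≤ (delta A A s : ℝ)
            then d * A.card * ((delta A A s : ℝ)) ^ 2 / k ^ 3 else 0) (p.1 - p.2) := by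
          apply Finset.sum_le_sum
          intro p _
          exact pair_bound A d k hSzT hk p.1 p.2
      _ = ∑ s ∈ A - A, (delta A A s : ℝ) * (if k ≤ (delta A A s : ℝ)
            then d * A.card * ((delta A A s : ℝ)) ^ 2 / k ^ 3 else 0) := by
            exact sum_fiber A (fun s => if k ≤ (delta A A s : ℝ)
              then d * A.card * ((delta A A s : ℝ)) ^ 2 / k ^ 3 else 0)
      _ = ∑ s ∈ (A - A).filter (fun s => k ≤ (delta A A s : ℝ)),
            d * m * (delta A A s : ℝ) ^ 3 / k ^ 3 := by
          rw [Finset.sum_filter]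
          apply Finset.sum_congr rfl
          intro s _
          rw [hA]
          split_ifs
          · ring
          · ring
  -- Step 3: dyadic bound on the cube sum
  have h3 : ∑ s ∈ (A - A).filter (fun s => k ≤ (delta A A s : ℝ)),
        d * m * (delta A A s : ℝ) ^ 3 / k ^ 3
      ≤ d * m / k ^ 3 * (8 * d * (m : ℝ) ^ 3 * ((J : ℝ) + 1)) := by
    have := sum_cube_le A d k m hA hm hSzT hk hd
    calc ∑ s ∈ (A - A).filter (fun s => k ≤ (delta A A s : ℝ)),
          d * m * (delta A A s : ℝ) ^ 3 / k ^ 3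
        = d * m / k ^ 3 * ∑ s ∈ (A - A).filter (fun s => k ≤ (delta A A s : ℝ)),
            (delta A A s : ℝ) ^ 3 := by
          rw [Finset.mul_sum]
          apply Finset.sum_congr rfl
          intro s _
          ring
      _ ≤ d * m / k ^ 3 * (8 * d * (m : ℝ) ^ 3 * ((J : ℝ) + 1)) := by
          apply mul_le_mul_of_nonneg_left this
          positivity
  -- Step 4: J + 1 ≤ 3 log n
  have hn4 : (4 : ℝ) ≤ (n : ℝ) := by
    have : 4 ≤ n := by rw [hn]; nlinarith
    exact_mod_cast this
  have hJlog : (J : ℝ) + 1 ≤ 3 * Real.log n := by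
    have hl2 : (0.6931471803 : ℝ) < Real.log 2 := Real.log_two_gt_d9
    have hlogn2 : Real.log 2 ≤ Real.log n := Real.log_le_log (by norm_num) (by linarith)
    have hpow : (2 : ℕ) ^ J ≤ m ^ 2 := Nat.pow_log_le_self 2 (by positivity)
    have hpowR : ((2 : ℝ)) ^ J ≤ (n : ℝ) := by
      rw [hn]
      exact_mod_cast hpow
    have hJl2 : (J : ℝ) * Real.log 2 ≤ Real.log n := by
      have := Real.log_le_log (by positivity) hpowR
      rwa [Real.log_pow] at this
    have hL0 : (0 : ℝ) < Real.log n := by linarith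
    nlinarith
  -- Assemble
  have h4 : d * m / k ^ 3 * (8 * d * (m : ℝ) ^ 3 * ((J : ℝ) + 1))
      ≤ 24 * d ^ 2 * (n : ℝ) ^ 2 * Real.log n / k ^ 3 := by
    have hmn : ((m : ℝ)) ^ 4 = ((n : ℝ)) ^ 2 := by
      rw [hn]
      push_cast
      ring
    have hm0 : (0 : ℝ) < m := by
      have : 0 < m := by omega
      exact_mod_cast this
    calc d * m / k ^ 3 * (8 * d * (m : ℝ) ^ 3 * ((J : ℝ) + 1))
        = 8 * d ^ 2 * (m : ℝ) ^ 4 * ((J : ℝ) + 1) / k ^ 3 := by ring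
      _ ≤ 8 * d ^ 2 * (m : ℝ) ^ 4 * (3 * Real.log n) / k ^ 3 := by
          gcongr
      _ = 24 * d ^ 2 * (n : ℝ) ^ 2 * Real.log n / k ^ 3 := by
          rw [← hmn]; ring
  linarith [h2, h3, h4]
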